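/- Polynomial mean value trace inequality: for all Hermitian matrices A, B, C of the same size, every integer q ≥ 1, and all s > 0, |tr[C(A^q − B^q)]| ≤ (q/4) tr[(s(A−B)² + s^{-1}C²)(|A|^{q−1} + |B|^{q−1})]. -/

import Mathlib

open Matrix

section helper_lemmas

private lemma young_nat (x y : ℝ) (hx : 0 ≤ x) (hy : 0 ≤ y) (q : ℕ) (hq : 1 ≤ q) :
    x * y ^ (q - 1) ≤ (x ^ q + (q - 1 : ℝ) * y ^ q) / q := by
  rcases eq_or_lt_of_le hq with h1 | h2
  · simp [← h1]
  · have hq2 : (2 : ℕ) ≤ q := h2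
    have hqR : (0 : ℝ) < q := by positivity
    have key := Real.geom_mean_le_arith_mean2_weighted
      (w₁ := 1 / q) (w₂ := (q - 1 : ℝ) / q) (p₁ := x ^ q) (p₂ := y ^ q)
      (by positivity) (by
        have h : (1:ℝ) ≤ q := by exact_mod_cast hq
        have hq0 : (0:ℝ) < q := by linarith
        apply div_nonneg (by linarith) (le_of_lt hq0)) (by positivity) (by positivity)
      (by field_simp; ring)
    have e1 : (x ^ q : ℝ) ^ ((1:ℝ) / q) = x := by
      rw [← Real.rpow_natCast x q, ← Real.rpow_mul hx]
      rw [mul_one_div, div_self (ne_of_gt hqR), Real.rpow_one]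
    have e2 : (y ^ q : ℝ) ^ (((q:ℝ) - 1) / q) = y ^ (q - 1) := by
      rw [← Real.rpow_natCast y q, ← Real.rpow_mul hy]
      rw [mul_div_cancel₀ _ (ne_of_gt hqR)]
      rw [show ((q:ℝ) - 1) = ((q - 1 : ℕ) : ℝ) by
        rw [Nat.cast_sub hq]; norm_num, Real.rpow_natCast]
    rw [e1, e2] at key
    calc x * y ^ (q-1) ≤ 1/q * x^q + (q-1:ℝ)/q * y^q := key
      _ = (x ^ q + (q - 1 : ℝ) * y ^ q) / q := by ring

lemma abs_pow_sub_pow (a b : ℝ) (q : ℕ) (hq : 1 ≤ q) :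
    |a ^ q - b ^ q| ≤ |a - b| * (q / 2 : ℝ) * (|a| ^ (q - 1) + |b| ^ (q - 1)) := by
  induction q, hq using Nat.le_induction with
  | base => simp; linarith [abs_nonneg (a - b)]
  | succ q hq ih =>
    have hx : (0:ℝ) ≤ |a| := abs_nonneg a
    have hy : (0:ℝ) ≤ |b| := abs_nonneg b
    have ht : (0:ℝ) ≤ |a - b| := abs_nonneg _
    have step : a ^ (q+1) - b ^ (q+1) = a * (a ^ q - b ^ q) + (a - b) * b ^ q := by ring
    have h1 : |a ^ (q+1) - b ^ (q+1)| ≤ |a| * |a ^ q - b ^ q| + |a - b| * |b| ^ q := by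
      rw [step]
      calc |a * (a ^ q - b ^ q) + (a - b) * b ^ q|
          ≤ |a * (a ^ q - b ^ q)| + |(a - b) * b ^ q| := abs_add_le _ _
        _ = |a| * |a ^ q - b ^ q| + |a - b| * |b| ^ q := by
            rw [abs_mul, abs_mul, abs_pow]
    have h2 : |a| * |a ^ q - b ^ q| ≤
        |a| * (|a - b| * (q / 2 : ℝ) * (|a| ^ (q - 1) + |b| ^ (q - 1))) :=
      mul_le_mul_of_nonneg_left ih hx
    have hxx : |a| * |a| ^ (q - 1) = |a| ^ q := by
      rw [← pow_succ']
      congr 1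
      omega
    have hyoung := young_nat |a| |b| hx hy q hq
    have hqR : (1:ℝ) ≤ q := by exact_mod_cast hq
    have goalsimp : ((q:ℕ) + 1 - 1) = q := by omega
    rw [show (((q+1:ℕ) : ℝ)) = (q:ℝ) + 1 by push_cast; ring, goalsimp]
    have h3 : |a| * (|a - b| * (q / 2 : ℝ) * (|a| ^ (q - 1) + |b| ^ (q - 1)))
        + |a - b| * |b| ^ q ≤ |a - b| * (((q:ℝ) + 1) / 2) * (|a| ^ q + |b| ^ q) := by
      have expand : |a| * (|a - b| * (q / 2 : ℝ) * (|a| ^ (q - 1) + |b| ^ (q - 1)))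
          = |a - b| * ((q/2:ℝ) * (|a| ^ q + |a| * |b| ^ (q-1))) := by
        rw [show |a| * (|a - b| * (q / 2 : ℝ) * (|a| ^ (q - 1) + |b| ^ (q - 1)))
            = |a - b| * ((q/2:ℝ) * (|a| * |a| ^ (q-1) + |a| * |b| ^ (q-1))) from by ring, hxx]
      rw [expand]
      have coeff : (q/2:ℝ) * (|a| ^ q + |a| * |b| ^ (q-1)) + |b| ^ q
          ≤ (((q:ℝ) + 1) / 2) * (|a| ^ q + |b| ^ q) := by
        have hq0 : (0:ℝ) < q := by linarith
        have hY : (q/2:ℝ) * (|a| * |b| ^ (q-1)) ≤ (|a|^q + ((q:ℝ)-1) * |b|^q)/2 := by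
          calc (q/2:ℝ) * (|a| * |b| ^ (q-1)) ≤ (q/2:ℝ) * ((|a|^q + ((q:ℝ)-1) * |b|^q)/q) := by
                apply mul_le_mul_of_nonneg_left hyoung (by positivity)
            _ = (|a|^q + ((q:ℝ)-1) * |b|^q)/2 := by field_simp
        nlinarith [hY]
      calc |a - b| * ((q/2:ℝ) * (|a| ^ q + |a| * |b| ^ (q-1))) + |a - b| * |b| ^ q
          = |a - b| * ((q/2:ℝ) * (|a| ^ q + |a| * |b| ^ (q-1)) + |b| ^ q) := by ring
        _ ≤ |a - b| * ((((q:ℝ) + 1) / 2) * (|a| ^ q + |b| ^ q)) :=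
            mul_le_mul_of_nonneg_left coeff ht
        _ = |a - b| * (((q:ℝ) + 1) / 2) * (|a| ^ q + |b| ^ q) := by ring
    linarith

private lemma pointwise_bound (p sc : ℂ) (a b s : ℝ) (hs : 0 < s) (q : ℕ) (hq : 1 ≤ q) :
    ‖p * (starRingEnd ℂ) (((a ^ q - b ^ q : ℝ) : ℂ) * sc)‖ ≤
      (q / 4 : ℝ) * ((s * Complex.normSq (((a - b : ℝ) : ℂ) * sc) + s⁻¹ * Complex.normSq p) *
        (|a| ^ (q - 1) + |b| ^ (q - 1))) := by
  have hm : 0 ≤ ‖p‖ := norm_nonneg p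
  have hc : 0 ≤ ‖sc‖ := norm_nonneg sc
  have hF : 0 ≤ |a| ^ (q - 1) + |b| ^ (q - 1) := by positivity
  have scalar := abs_pow_sub_pow a b q hq
  have key : 2 * (‖p‖ * (|a - b| * ‖sc‖)) ≤
      s * (|a - b| * ‖sc‖) ^ 2 + s⁻¹ * (‖p‖) ^ 2 := by
    have hss : s * s⁻¹ = 1 := mul_inv_cancel₀ (ne_of_gt hs)
    have hsi : (0:ℝ) < s⁻¹ := inv_pos.mpr hs
    nlinarith [sq_nonneg (s * (|a - b| * ‖sc‖) - ‖p‖), hss, hsi.le, hs.le]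
  have habs : ‖p * (starRingEnd ℂ) (((a ^ q - b ^ q : ℝ) : ℂ) * sc)‖
      = ‖p‖ * (|a ^ q - b ^ q| * ‖sc‖) := by
    rw [norm_mul, Complex.norm_conj, norm_mul, Complex.norm_real, Real.norm_eq_abs]
  have hnormQ : Complex.normSq (((a - b : ℝ) : ℂ) * sc) = (|a - b| * ‖sc‖) ^ 2 := by
    rw [Complex.normSq_eq_norm_sq, norm_mul, Complex.norm_real, Real.norm_eq_abs, mul_pow]
    
  rw [habs, hnormQ, Complex.normSq_eq_norm_sq]
  calc ‖p‖ * (|a ^ q - b ^ q| * ‖sc‖)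
      ≤ ‖p‖ * ((|a - b| * (q / 2 : ℝ) * (|a| ^ (q-1) + |b| ^ (q-1))) * ‖sc‖) :=
        mul_le_mul_of_nonneg_left (mul_le_mul_of_nonneg_right scalar hc) hm
    _ = (q / 4 : ℝ) * ((2 * (‖p‖ * (|a - b| * ‖sc‖))) *
          (|a| ^ (q-1) + |b| ^ (q-1))) := by ring
    _ ≤ (q / 4 : ℝ) * ((s * (|a - b| * ‖sc‖) ^ 2 + s⁻¹ * (‖p‖) ^ 2) *
          (|a| ^ (q-1) + |b| ^ (q-1))) := by
        apply mul_le_mul_of_nonneg_left (mul_le_mul_of_nonneg_right key hF) (by positivity)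

private lemma conj_pow_aux {d : ℕ} (W D : Matrix (Fin d) (Fin d) ℂ)
    (hW : W * star W = 1) (hW' : star W * W = 1) (q : ℕ) :
    (W * D * star W) ^ q = W * D ^ q * star W := by
  induction q with
  | zero => simp [hW]
  | succ n ih =>
    rw [pow_succ, ih, pow_succ]
    calc W * D ^ n * star W * (W * D * star W)
        = W * D ^ n * (star W * W) * (D * star W) := by simp only [mul_assoc]
      _ = W * (D ^ n * D) * star W := by rw [hW']; simp only [mul_one, mul_assoc]

end helper_lemmas

set_option maxHeartbeats 1600000 in
/-- Polynomial mean value trace inequality: for Hermitian `A, B, C`, every integer `q ≥ 1`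
and every `s > 0`,
`|tr[C(A^q − B^q)]| ≤ (q/4) tr[(s(A−B)² + s⁻¹C²)(|A|^{q−1} + |B|^{q−1})]`,
where `|A|` is the matrix absolute value, obtained here by functional calculus. -/
theorem poly_mean_value_trace_inequality {d : ℕ} (A B C : Matrix (Fin d) (Fin d) ℂ)
    (hA : A.IsHermitian) (hB : B.IsHermitian) (hC : C.IsHermitian)
    (q : ℕ) (hq : 1 ≤ q) (s : ℝ) (hs : 0 < s) :
    ‖Matrix.trace (C * (A ^ q - B ^ q))‖ ≤
      (q / 4 : ℝ) * (Matrix.trace ((s • (A - B) ^ 2 + s⁻¹ • C ^ 2) *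
        (cfc (fun x : ℝ => |x| ^ (q - 1)) A + cfc (fun x : ℝ => |x| ^ (q - 1)) B))).re := by
  classical
  set U : Matrix (Fin d) (Fin d) ℂ := (hA.eigenvectorUnitary : Matrix (Fin d) (Fin d) ℂ) with hUdef
  set V : Matrix (Fin d) (Fin d) ℂ := (hB.eigenvectorUnitary : Matrix (Fin d) (Fin d) ℂ) with hVdef
  set a : Fin d → ℝ := hA.eigenvalues with hadef
  set b : Fin d → ℝ := hB.eigenvalues with hbdef
  have hU1 : U * star U = 1 := mem_unitaryGroup_iff.mp hA.eigenvectorUnitary.2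
  have hU2 : star U * U = 1 := mem_unitaryGroup_iff'.mp hA.eigenvectorUnitary.2
  have hV1 : V * star V = 1 := mem_unitaryGroup_iff.mp hB.eigenvectorUnitary.2
  have hV2 : star V * V = 1 := mem_unitaryGroup_iff'.mp hB.eigenvectorUnitary.2
  have hAspec : A = U * diagonal (fun i => ((a i : ℝ) : ℂ)) * star U := hA.spectral_theorem
  have hBspec : B = V * diagonal (fun j => ((b j : ℝ) : ℂ)) * star V := hB.spectral_theorem
  set P : Matrix (Fin d) (Fin d) ℂ := star U * C * V with hPdef
  set S : Matrix (Fin d) (Fin d) ℂ := star U * V with hSdef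
  set Q : Matrix (Fin d) (Fin d) ℂ := star U * (A - B) * V with hQdef
  set R : Matrix (Fin d) (Fin d) ℂ := star U * (A ^ q - B ^ q) * V with hRdef
  -- entry formulas
  have hUA : ∀ (g : Fin d → ℂ), star U * (U * diagonal g * star U) = diagonal g * star U := by
    intro g
    rw [← mul_assoc, ← mul_assoc, hU2, one_mul]
  have hBVgen : ∀ (g : Fin d → ℂ), (V * diagonal g * star V) * V = V * diagonal g := by
    intro g
    rw [mul_assoc, hV2, mul_one]
  have hApow : A ^ q = U * diagonal (fun i => ((a i : ℂ)) ^ q) * star U := by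
    rw [hAspec, conj_pow_aux U _ hU1 hU2 q, Matrix.diagonal_pow]
    rfl
  have hBpow : B ^ q = V * diagonal (fun j => ((b j : ℂ)) ^ q) * star V := by
    rw [hBspec, conj_pow_aux V _ hV1 hV2 q, Matrix.diagonal_pow]
    rfl
  have hUA' : star U * A = diagonal (fun i => (a i : ℂ)) * star U := by
    rw [hAspec]; exact hUA _
  have hBV' : B * V = V * diagonal (fun j => (b j : ℂ)) := by
    rw [hBspec]; exact hBVgen _
  have hUAq : star U * A ^ q = diagonal (fun i => (a i : ℂ) ^ q) * star U := by
    rw [hApow]; exact hUA _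
  have hBVq : B ^ q * V = V * diagonal (fun j => (b j : ℂ) ^ q) := by
    rw [hBpow]; exact hBVgen _
  have hQ_entry : ∀ i j, Q i j = (((a i - b j : ℝ)) : ℂ) * S i j := by
    intro i j
    have e : Q = diagonal (fun i => (a i : ℂ)) * S - S * diagonal (fun j => (b j : ℂ)) := by
      rw [hQdef, Matrix.mul_sub, Matrix.sub_mul]
      congr 1
      · rw [hUA', mul_assoc]
      · rw [mul_assoc, hBV', ← mul_assoc]
    rw [e]
    simp only [Matrix.sub_apply, Matrix.diagonal_mul, Matrix.mul_diagonal]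
    push_cast
    ring
  have hR_entry : ∀ i j, R i j = (((a i ^ q - b j ^ q : ℝ)) : ℂ) * S i j := by
    intro i j
    have e : R = diagonal (fun i => (a i : ℂ) ^ q) * S - S * diagonal (fun j => (b j : ℂ) ^ q) := by
      rw [hRdef, Matrix.mul_sub, Matrix.sub_mul, hUAq, mul_assoc (star U) (B ^ q) V, hBVq,
        hSdef]
      simp only [mul_assoc]
    rw [e]
    simp only [Matrix.sub_apply, Matrix.diagonal_mul, Matrix.mul_diagonal]
    push_cast
    ring
  -- decompositions
  have hCdec : C = U * P * star V := by
    rw [hPdef]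
    rw [show U * (star U * C * V) * star V = (U * star U) * C * (V * star V) from by
      simp only [mul_assoc], hU1, hV1, one_mul, mul_one]
  have hXherm : (A ^ q - B ^ q).IsHermitian := (hA.pow q).sub (hB.pow q)
  have hDherm : (A - B).IsHermitian := hA.sub hB
  have hstarR : star R = star V * ((A ^ q - B ^ q) * U) := by
    rw [hRdef]
    simp only [StarMul.star_mul, star_star, mul_assoc]
    rw [show star (A ^ q - B ^ q) = A ^ q - B ^ q from hXherm]
  have hstarP : star P = star V * (C * U) := by
    rw [hPdef]
    simp only [StarMul.star_mul, star_star, mul_assoc]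
    rw [show star C = C from hC]
  have hstarQ : star Q = star V * ((A - B) * U) := by
    rw [hQdef]
    simp only [StarMul.star_mul, star_star, mul_assoc]
    rw [show star (A - B) = A - B from hDherm]
  -- LHS trace as entrywise sum
  have tLHS : trace (C * (A ^ q - B ^ q)) = trace (P * star R) := by
    rw [hCdec, hstarR]
    rw [show U * P * star V * (A ^ q - B ^ q) = U * (P * (star V * (A ^ q - B ^ q))) from by
      simp only [mul_assoc]]
    rw [trace_mul_comm]
    simp only [mul_assoc]
  have entry_trace : ∀ (M N : Matrix (Fin d) (Fin d) ℂ),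
      trace (M * star N) = ∑ i, ∑ j, M i j * (starRingEnd ℂ) (N i j) := by
    intro M N
    simp [Matrix.trace, Matrix.diag, Matrix.mul_apply, Matrix.star_apply, Complex.star_def]
  -- cfc
  have hGA : cfc (fun x : ℝ => |x| ^ (q - 1)) A
      = U * diagonal (fun i => ((|a i| ^ (q - 1) : ℝ) : ℂ)) * star U := by
    rw [hA.cfc_eq]; rfl
  have hGB : cfc (fun x : ℝ => |x| ^ (q - 1)) B
      = V * diagonal (fun j => ((|b j| ^ (q - 1) : ℝ) : ℂ)) * star V := by
    rw [hB.cfc_eq]; rfl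
  -- trace against a conjugated diagonal
  have htrace_diag : ∀ (M W : Matrix (Fin d) (Fin d) ℂ) (g : Fin d → ℂ),
      trace (M * (W * diagonal g * star W)) = ∑ i, g i * (star W * M * W) i i := by
    intro M W g
    rw [show M * (W * diagonal g * star W) = M * W * diagonal g * star W from by
      simp only [mul_assoc]]
    rw [trace_mul_comm]
    rw [show star W * (M * W * diagonal g) = (star W * M * W) * diagonal g from by
      simp only [mul_assoc]]
    simp [Matrix.trace, Matrix.diag, Matrix.mul_diagonal, mul_comm]
  -- quadratic conjugations
  have hC2U : star U * C ^ 2 * U = P * star P := by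
    rw [pow_two, hstarP, hPdef]
    rw [show star U * C * V * (star V * (C * U)) = star U * C * (V * star V) * (C * U) from by
      simp only [mul_assoc], hV1]
    simp only [mul_one, mul_assoc]
  have hC2V : star V * C ^ 2 * V = star P * P := by
    rw [pow_two, hstarP, hPdef]
    rw [show star V * (C * U) * (star U * C * V) = star V * (C * ((U * star U) * (C * V))) from by
      simp only [mul_assoc], hU1]
    simp only [one_mul, mul_assoc]
  have hD2U : star U * (A - B) ^ 2 * U = Q * star Q := by
    rw [pow_two, hstarQ, hQdef]
    rw [show star U * (A - B) * V * (star V * ((A - B) * U))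
        = star U * (A - B) * (V * star V) * ((A - B) * U) from by
      simp only [mul_assoc], hV1]
    simp only [mul_one, mul_assoc]
  have hD2V : star V * (A - B) ^ 2 * V = star Q * Q := by
    rw [pow_two, hstarQ, hQdef]
    rw [show star V * ((A - B) * U) * (star U * (A - B) * V)
        = star V * ((A - B) * ((U * star U) * ((A - B) * V))) from by
      simp only [mul_assoc], hU1]
    simp only [one_mul, mul_assoc]
  -- diagonal entries of products
  have hPPd : ∀ i, (P * star P) i i = ∑ j, P i j * (starRingEnd ℂ) (P i j) := by
    intro i
    simp [Matrix.mul_apply, Matrix.star_apply, Complex.star_def]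
  have hPPd' : ∀ j, (star P * P) j j = ∑ i, (starRingEnd ℂ) (P i j) * P i j := by
    intro j
    simp [Matrix.mul_apply, Matrix.star_apply, Complex.star_def]
  have hQQd : ∀ i, (Q * star Q) i i = ∑ j, Q i j * (starRingEnd ℂ) (Q i j) := by
    intro i
    simp [Matrix.mul_apply, Matrix.star_apply, Complex.star_def]
  have hQQd' : ∀ j, (star Q * Q) j j = ∑ i, (starRingEnd ℂ) (Q i j) * Q i j := by
    intro j
    simp [Matrix.mul_apply, Matrix.star_apply, Complex.star_def]
  -- the four diagonal-trace computations
  have tDGA : trace ((A - B) ^ 2 * cfc (fun x : ℝ => |x| ^ (q - 1)) A)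
      = ((∑ i, ∑ j, |a i| ^ (q - 1) * Complex.normSq (Q i j) : ℝ) : ℂ) := by
    rw [hGA, htrace_diag, show star U * ((A - B) ^ 2) * U = Q * star Q from hD2U]
    simp only [hQQd, Complex.mul_conj, Finset.mul_sum]
    push_cast
    rfl
  have tDGB : trace ((A - B) ^ 2 * cfc (fun x : ℝ => |x| ^ (q - 1)) B)
      = ((∑ j, ∑ i, |b j| ^ (q - 1) * Complex.normSq (Q i j) : ℝ) : ℂ) := by
    rw [hGB, htrace_diag, show star V * ((A - B) ^ 2) * V = star Q * Q from hD2V]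
    simp only [hQQd', ← Complex.normSq_eq_conj_mul_self, Finset.mul_sum]
    push_cast
    rfl
  have tCGA : trace (C ^ 2 * cfc (fun x : ℝ => |x| ^ (q - 1)) A)
      = ((∑ i, ∑ j, |a i| ^ (q - 1) * Complex.normSq (P i j) : ℝ) : ℂ) := by
    rw [hGA, htrace_diag, show star U * (C ^ 2) * U = P * star P from hC2U]
    simp only [hPPd, Complex.mul_conj, Finset.mul_sum]
    push_cast
    rfl
  have tCGB : trace (C ^ 2 * cfc (fun x : ℝ => |x| ^ (q - 1)) B)
      = ((∑ j, ∑ i, |b j| ^ (q - 1) * Complex.normSq (P i j) : ℝ) : ℂ) := by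
    rw [hGB, htrace_diag, show star V * (C ^ 2) * V = star P * P from hC2V]
    simp only [hPPd', ← Complex.normSq_eq_conj_mul_self, Finset.mul_sum]
    push_cast
    rfl
  -- real part of the RHS trace
  have hre : (trace ((s • (A - B) ^ 2 + s⁻¹ • C ^ 2) *
        (cfc (fun x : ℝ => |x| ^ (q - 1)) A + cfc (fun x : ℝ => |x| ^ (q - 1)) B))).re
      = s * ((∑ i, ∑ j, |a i| ^ (q - 1) * Complex.normSq (Q i j))
            + (∑ j, ∑ i, |b j| ^ (q - 1) * Complex.normSq (Q i j)))
        + s⁻¹ * ((∑ i, ∑ j, |a i| ^ (q - 1) * Complex.normSq (P i j))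
            + (∑ j, ∑ i, |b j| ^ (q - 1) * Complex.normSq (P i j))) := by
    simp only [add_mul, smul_mul_assoc, mul_add, trace_add, trace_smul]
    rw [tDGA, tDGB, tCGA, tCGB]
    simp only [Complex.real_smul, ← Complex.ofReal_add, ← Complex.ofReal_mul, Complex.ofReal_re]
    ring
  -- the entrywise bound
  have hbound : ‖trace (C * (A ^ q - B ^ q))‖ ≤
      ∑ i, ∑ j, (q / 4 : ℝ) * ((s * Complex.normSq (Q i j) + s⁻¹ * Complex.normSq (P i j)) *
        (|a i| ^ (q - 1) + |b j| ^ (q - 1))) := by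
    rw [tLHS, entry_trace]
    refine le_trans (norm_sum_le _ _) (Finset.sum_le_sum fun i _ => ?_)
    refine le_trans (norm_sum_le _ _) (Finset.sum_le_sum fun j _ => ?_)
    rw [hR_entry i j, hQ_entry i j]
    exact pointwise_bound (P i j) (S i j) (a i) (b j) s hs q hq
  -- match the two sides
  have swapQ : (∑ j, ∑ i, |b j| ^ (q - 1) * Complex.normSq (Q i j))
      = ∑ i, ∑ j, |b j| ^ (q - 1) * Complex.normSq (Q i j) := Finset.sum_comm
  have swapP : (∑ j, ∑ i, |b j| ^ (q - 1) * Complex.normSq (P i j))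
      = ∑ i, ∑ j, |b j| ^ (q - 1) * Complex.normSq (P i j) := Finset.sum_comm
  refine hbound.trans (le_of_eq ?_)
  rw [hre, swapQ, swapP]
  simp only [mul_add, add_mul, Finset.mul_sum, ← Finset.sum_add_distrib]
  refine Finset.sum_congr rfl fun i _ => Finset.sum_congr rfl fun j _ => ?_
  ring
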